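/- For the braid/type A_{n−1} setting, let h : {1,…,n} → {1,…,n} be a Hessenberg function (i ≤ h(i) and h weakly increasing), and for 1 ≤ i ≤ j ≤ n define ψ^A_{i,j} = ∑_{k=1}^{i} (∏_{ℓ=i+1}^{j} (x_k − x_ℓ)) (∂_k − (1/n)(∂₁+⋯+∂ₙ)). Then for every root x_p − x_q with p < q ≤ h(p) and every i, the polynomial ψ^A_{i,h(i)}(x_p − x_q) is divisible by x_p − x_q. -/

import Mathlib

open MvPolynomial

noncomputable section

/-- The derivation `ψ^A_{i,j} = ∑_{k=1}^{i} (∏_{ℓ=i+1}^{j} (x_k − x_ℓ)) (∂_k − (1/n)∂̄)`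
of type `A_{n-1}`, applied to a polynomial `p`; here `∂̄ = ∂₁ + ⋯ + ∂ₙ`. -/
def psiA (n i j : ℕ) (p : MvPolynomial ℕ ℝ) : MvPolynomial ℕ ℝ :=
  ∑ k ∈ Finset.Icc 1 i,
    (∏ l ∈ Finset.Icc (i + 1) j, (X k - X l)) *
      (pderiv k p - C ((n : ℝ)⁻¹) * ∑ m ∈ Finset.Icc 1 n, pderiv m p)

lemma dvd_prod_sub_prod {R : Type*} [CommRing R] (d : R) (s : Finset ℕ) (f g : ℕ → R)
    (H : ∀ l ∈ s, d ∣ f l - g l) :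
    d ∣ (∏ l ∈ s, f l) - ∏ l ∈ s, g l := by
  classical
  induction s using Finset.induction_on with
  | empty => simp
  | @insert a s ha ih =>
    rw [Finset.prod_insert ha, Finset.prod_insert ha]
    have h1 : f a * ∏ l ∈ s, f l - g a * ∏ l ∈ s, g l =
        (f a - g a) * ∏ l ∈ s, f l + g a * ((∏ l ∈ s, f l) - ∏ l ∈ s, g l) := by ring
    rw [h1]
    exact dvd_add ((H a (Finset.mem_insert_self a s)).mul_right _)
      ((ih (fun l hl => H l (Finset.mem_insert_of_mem hl))).mul_left _)

/-- for a Hessenberg function `h` of type `A_{n-1}` and any root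
`x_p − x_q` with `p < q ≤ h(p)`, the polynomial `ψ^A_{i,h(i)}(x_p − x_q)` is divisible
by `x_p − x_q`, for every `i`. -/
theorem statement5 (n : ℕ) (hn : 2 ≤ n) (h : ℕ → ℕ)
    (hh1 : ∀ i ∈ Finset.Icc 1 n, i ≤ h i ∧ h i ≤ n)
    (hh2 : ∀ i, 1 ≤ i → i < n → h i ≤ h (i + 1))
    (p q : ℕ) (hp : 1 ≤ p) (hpq : p < q) (hq : q ≤ h p) :
    ∀ i ∈ Finset.Icc 1 n,
      psiA n i (h i) (X p - X q) ∈ Ideal.span {(X p - X q : MvPolynomial ℕ ℝ)} := by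
  intro i hi
  rw [Finset.mem_Icc] at hi
  obtain ⟨hi1, hi2⟩ := hi
  have hq1 : 1 ≤ q := hp.trans hpq.le
  -- derivative of the root
  have hder : ∀ k, pderiv k (X p - X q : MvPolynomial ℕ ℝ)
      = (if p = k then 1 else 0) - (if q = k then 1 else 0) := by
    intro k
    rw [map_sub, pderiv_X, pderiv_X]
    simp [Pi.single_apply]
  -- the "total derivative" term vanishes
  have hS : (∑ m ∈ Finset.Icc 1 n, pderiv m (X p - X q : MvPolynomial ℕ ℝ)) = 0 := by
    simp only [hder, Finset.sum_sub_distrib, Finset.sum_ite_eq, Finset.mem_Icc]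
    by_cases hpn : p ≤ n
    · have hqn : q ≤ n := hq.trans (hh1 p (Finset.mem_Icc.mpr ⟨hp, hpn⟩)).2
      simp [hp, hpn, hq1, hqn]
    · have hqn : ¬ q ≤ n := fun hc => hpn (hpq.le.trans hc)
      simp [hpn, hqn]
  set P : ℕ → MvPolynomial ℕ ℝ := fun k => ∏ l ∈ Finset.Icc (i + 1) (h i), (X k - X l)
    with hP
  have hpsi : psiA n i (h i) (X p - X q)
      = (if p ∈ Finset.Icc 1 i then P p else 0) - (if q ∈ Finset.Icc 1 i then P q else 0) := by
    unfold psiA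
    rw [hS]
    simp only [mul_zero, sub_zero, hder, ← hP]
    simp only [mul_sub, Finset.sum_sub_distrib, mul_ite, mul_one, mul_zero,
      Finset.sum_ite_eq, Finset.mem_Icc]
    rfl
  rw [hpsi, Ideal.mem_span_singleton]
  by_cases hqi : q ≤ i
  · have hpi : p ≤ i := hpq.le.trans hqi
    rw [if_pos (Finset.mem_Icc.mpr ⟨hp, hpi⟩), if_pos (Finset.mem_Icc.mpr ⟨hq1, hqi⟩)]
    exact dvd_prod_sub_prod _ _ _ _ (fun l _ => by
      have : (X p - X l) - (X q - X l) = (X p - X q : MvPolynomial ℕ ℝ) := by ring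
      rw [this])
  · rw [if_neg (fun hc => hqi (Finset.mem_Icc.mp hc).2), sub_zero]
    by_cases hpi : p ≤ i
    · rw [if_pos (Finset.mem_Icc.mpr ⟨hp, hpi⟩)]
      -- monotonicity of h on [p, i]
      have hmono : ∀ b, p ≤ b → b ≤ n → h p ≤ h b := by
        intro b
        induction b with
        | zero => intro hb _; omega
        | succ c ih =>
          intro hb hbn
          rcases Nat.lt_or_ge p (c + 1) with hlt | hge
          · have hc : p ≤ c := by omega
            have : h p ≤ h c := ih hc (by omega)
            exact this.trans (hh2 c (hp.trans hc) (by omega))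
          · have : p = c + 1 := by omega
            rw [this]
      have hqhi : q ≤ h i := hq.trans (hmono i hpi hi2)
      have hmem : q ∈ Finset.Icc (i + 1) (h i) := Finset.mem_Icc.mpr ⟨by omega, hqhi⟩
      have := Finset.dvd_prod_of_mem (fun l => (X p - X l : MvPolynomial ℕ ℝ)) hmem
      exact this
    · rw [if_neg (fun hc => hpi (Finset.mem_Icc.mp hc).2)]
      simp
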